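/- For any multicast discrete memoryless channel with possibly different energy functions b_ℓ and unequal energy constraints, any positive integer n, and any energy constraint vector B⃗ in the feasible domain 𝓑, the n-th multicast capacity-energy function single-letterizes: C_n(B⃗) = n·C_1(B⃗). -/

import Mathlib

open scoped BigOperators

noncomputable section

/-- A probability vector on a finite alphabet. -/
def IsProbVec {α : Type} [Fintype α] (p : α → ℝ) : Prop :=
  (∀ a, 0 ≤ p a) ∧ (∑ a, p a) = 1

/-- A (row-stochastic) discrete channel. -/
def IsChannel {α β : Type} [Fintype β] (W : α → β → ℝ) : Prop :=
  ∀ x, (∀ y, 0 ≤ W x y) ∧ (∑ y, W x y) = 1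

/-- The memoryless `n`-letter extension of a channel. -/
def nCh {α β : Type} (W : α → β → ℝ) (n : ℕ) (x : Fin n → α) (y : Fin n → β) : ℝ :=
  ∏ i, W (x i) (y i)

/-- Output distribution induced by input distribution `p` through channel `W`. -/
def outDist {α β : Type} [Fintype α] (p : α → ℝ) (W : α → β → ℝ) (y : β) : ℝ :=
  ∑ x, p x * W x y

/-- Expected value `E[b(Y)]` of an energy function `b` at the channel output. -/
def outEnergy {α β : Type} [Fintype α] [Fintype β] (p : α → ℝ) (W : α → β → ℝ)
    (b : β → ℝ) : ℝ :=
  ∑ y, outDist p W y * b y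

/-- Additive block extension of an energy function. -/
def blockE {β : Type} (b : β → ℝ) {n : ℕ} (y : Fin n → β) : ℝ := ∑ i, b (y i)

/-- Mutual information `I(X;Y)` between the input `X ~ p` and the output of channel `W`. -/
def mutInfo {α β : Type} [Fintype α] [Fintype β] (p : α → ℝ) (W : α → β → ℝ) : ℝ :=
  ∑ x, ∑ y, p x * W x y * Real.log (W x y / outDist p W y)

/-- The `n`-th multicast capacity-energy function with energy constraint vector `B`. -/
def CnVec {𝓧 : Type} [Fintype 𝓧] {L : ℕ} {𝓨 : Fin L → Type} [∀ ℓ, Fintype (𝓨 ℓ)]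
    (W : ∀ ℓ, 𝓧 → 𝓨 ℓ → ℝ) (b : ∀ ℓ, 𝓨 ℓ → ℝ) (B : Fin L → ℝ) (n : ℕ) : ℝ :=
  sSup { r | ∃ p : (Fin n → 𝓧) → ℝ, IsProbVec p ∧
      (∀ ℓ, (n : ℝ) * B ℓ ≤ outEnergy p (nCh (W ℓ) n) (blockE (b ℓ))) ∧
      r = ⨅ ℓ, mutInfo p (nCh (W ℓ) n) }

/-- The multicast capacity-energy function `C(B⃗) = sup_n C_n(B⃗)/n`. -/
def CcapVec {𝓧 : Type} [Fintype 𝓧] {L : ℕ} {𝓨 : Fin L → Type} [∀ ℓ, Fintype (𝓨 ℓ)]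
    (W : ∀ ℓ, 𝓧 → 𝓨 ℓ → ℝ) (b : ∀ ℓ, 𝓨 ℓ → ℝ) (B : Fin L → ℝ) : ℝ :=
  ⨆ n : ℕ+, CnVec W b B n / (n : ℝ)

/-- Input distribution on `𝓧ⁿ` induced by a uniformly distributed message through encoder `f`. -/
def inducedDist {𝓧 : Type} [Fintype 𝓧] [DecidableEq 𝓧] {n M : ℕ}
    (f : Fin M → (Fin n → 𝓧)) (x : Fin n → 𝓧) : ℝ :=
  ((Finset.univ.filter (fun w => f w = x)).card : ℝ) / M

/-- Average error probability of the code `(f, g)` over channel `W`. -/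
def errProb {𝓧 𝓨 : Type} [Fintype 𝓨] {n M : ℕ}
    (W : 𝓧 → 𝓨 → ℝ) (f : Fin M → (Fin n → 𝓧)) (g : (Fin n → 𝓨) → Fin M) : ℝ :=
  (M : ℝ)⁻¹ * ∑ w, ∑ y, if g y = w then 0 else nCh W n (f w) y


/-- The domain `𝓑` of feasible energy constraint vectors: all `B⃗ ∈ ℝ^L` of the form
`B_ℓ = q⃗ · [P(ℓ)] · b⃗_ℓ` for some probability vector `q⃗` on the input alphabet. -/
def FeasibleB {𝓧 : Type} [Fintype 𝓧] {L : ℕ} {𝓨 : Fin L → Type} [∀ ℓ, Fintype (𝓨 ℓ)]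
    (W : ∀ ℓ, 𝓧 → 𝓨 ℓ → ℝ) (b : ∀ ℓ, 𝓨 ℓ → ℝ) : Set (Fin L → ℝ) :=
  { B | ∃ q : 𝓧 → ℝ, IsProbVec q ∧ ∀ ℓ, B ℓ = outEnergy q (W ℓ) (b ℓ) }


set_option linter.unusedSectionVars false

lemma neg_mul_log_le_one {t : ℝ} (ht : 0 < t) : t * (-Real.log t) ≤ 1 := by
  have h1 : Real.log (t⁻¹) ≤ t⁻¹ - 1 := Real.log_le_sub_one_of_pos (by positivity)
  rw [Real.log_inv] at h1
  have h2 : t * (-Real.log t) ≤ t * (t⁻¹ - 1) := mul_le_mul_of_nonneg_left h1 ht.le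
  have h3 : t * (t⁻¹ - 1) = 1 - t := by field_simp
  linarith

section Aux
variable {α β : Type} [Fintype α] [Fintype β]

lemma outDist_nonneg {p : α → ℝ} (hp : ∀ a, 0 ≤ p a) {W : α → β → ℝ}
    (hW : ∀ x y, 0 ≤ W x y) (y : β) : 0 ≤ outDist p W y :=
  Finset.sum_nonneg fun x _ => mul_nonneg (hp x) (hW x y)

lemma sum_outDist {p : α → ℝ} (hp : (∑ a, p a) = 1) {W : α → β → ℝ}
    (hW : IsChannel W) : ∑ y, outDist p W y = 1 := by
  unfold outDist
  rw [Finset.sum_comm]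
  simp only [← Finset.mul_sum, (hW _).2, mul_one]
  exact hp

lemma term_le_outDist {p : α → ℝ} (hp : ∀ a, 0 ≤ p a) {W : α → β → ℝ}
    (hW : ∀ x y, 0 ≤ W x y) (x : α) (y : β) : p x * W x y ≤ outDist p W y :=
  Finset.single_le_sum (fun a _ => mul_nonneg (hp a) (hW a y)) (Finset.mem_univ x)

lemma mutInfo_le_card (p : α → ℝ) (hp : ∀ a, 0 ≤ p a)
    (W : α → β → ℝ) (hW : IsChannel W) :
    mutInfo p W ≤ (Fintype.card α : ℝ) * (Fintype.card β : ℝ) := by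
  have hterm : ∀ x y, p x * W x y * Real.log (W x y / outDist p W y) ≤ 1 := by
    intro x y
    rcases eq_or_lt_of_le (mul_nonneg (hp x) ((hW x).1 y)) with h0 | h0
    · rw [← h0]; norm_num
    · have hWxy : 0 < W x y := by
        rcases eq_or_lt_of_le ((hW x).1 y) with h1 | h1
        · exfalso; rw [← h1, mul_zero] at h0; exact lt_irrefl _ h0
        · exact h1
      have hout : p x * W x y ≤ outDist p W y := term_le_outDist hp (fun a c => (hW a).1 c) x y
      have houtpos : 0 < outDist p W y := lt_of_lt_of_le h0 hout
      have hW1 : W x y ≤ 1 := by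
        have := Finset.single_le_sum (fun c _ => (hW x).1 c) (Finset.mem_univ y)
        rw [(hW x).2] at this; exact this
      have hdivle : W x y / outDist p W y ≤ 1 / (p x * W x y) :=
        div_le_div₀ (zero_le_one) hW1 h0 hout
      have hlog : Real.log (W x y / outDist p W y) ≤ Real.log (1 / (p x * W x y)) :=
        Real.log_le_log (by positivity) hdivle
      have : Real.log (1 / (p x * W x y)) = -Real.log (p x * W x y) := by
        rw [one_div, Real.log_inv]
      rw [this] at hlog
      calc p x * W x y * Real.log (W x y / outDist p W y)
          ≤ p x * W x y * (-Real.log (p x * W x y)) := mul_le_mul_of_nonneg_left hlog h0.le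
        _ ≤ 1 := neg_mul_log_le_one h0
  calc mutInfo p W ≤ ∑ _x : α, ∑ _y : β, (1:ℝ) :=
        Finset.sum_le_sum fun x _ => Finset.sum_le_sum fun y _ => hterm x y
    _ = (Fintype.card α : ℝ) * (Fintype.card β : ℝ) := by
        simp [Finset.card_univ, mul_comm]
end Aux

lemma sum_pi_prod_single {β : Type} [Fintype β] {n : ℕ} (g : Fin n → β → ℝ)
    (hg : ∀ j, ∑ c, g j c = 1) (i : Fin n) (f : β → ℝ) :
    ∑ y : Fin n → β, (∏ j, g j (y j)) * f (y i) = ∑ c, g i c * f c := by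
  classical
  calc ∑ y : Fin n → β, (∏ j, g j (y j)) * f (y i)
      = ∑ y : Fin n → β, ∏ j, (if j = i then g j (y j) * f (y j) else g j (y j)) := by
        refine Finset.sum_congr rfl fun y _ => ?_
        rw [← Finset.mul_prod_erase Finset.univ
              (fun j => if j = i then g j (y j) * f (y j) else g j (y j)) (Finset.mem_univ i),
            if_pos rfl,
            ← Finset.mul_prod_erase Finset.univ (fun j => g j (y j)) (Finset.mem_univ i),
            Finset.prod_congr rfl (fun j hj => if_neg (Finset.ne_of_mem_erase hj))]
        ring
    _ = ∏ j, ∑ c, (if j = i then g j c * f c else g j c) :=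
        (Fintype.prod_sum fun j c => if j = i then g j c * f c else g j c).symm
    _ = ∑ c, g i c * f c := by
        rw [← Finset.mul_prod_erase Finset.univ _ (Finset.mem_univ i)]
        have h1 : (∑ c : β, if i = i then g i c * f c else g i c) = ∑ c, g i c * f c := by simp
        have h2 : ∀ j ∈ Finset.univ.erase i,
            (∑ c : β, if j = i then g j c * f c else g j c) = 1 := fun j hj => by
          simp [if_neg (Finset.ne_of_mem_erase hj), hg j]
        rw [h1, Finset.prod_congr rfl h2, Finset.prod_const_one, mul_one]

section Marg
variable {α β : Type} [Fintype α] [Fintype β] [DecidableEq α] {n : ℕ}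

/-- The `i`-th marginal of an `n`-letter input distribution. -/
def marg (p : (Fin n → α) → ℝ) (i : Fin n) (a : α) : ℝ :=
  ∑ x : Fin n → α, if x i = a then p x else 0

lemma marg_nonneg {p : (Fin n → α) → ℝ} (hp : ∀ x, 0 ≤ p x) (i : Fin n) (a : α) :
    0 ≤ marg p i a :=
  Finset.sum_nonneg fun x _ => by by_cases h : x i = a <;> simp [marg, h, hp x]

lemma sum_marg (p : (Fin n → α) → ℝ) (i : Fin n) :
    ∑ a, marg p i a = ∑ x, p x := by
  unfold marg
  rw [Finset.sum_comm]
  exact Finset.sum_congr rfl fun x _ => by simp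

lemma le_marg {p : (Fin n → α) → ℝ} (hp : ∀ x, 0 ≤ p x) (i : Fin n) (x : Fin n → α) :
    p x ≤ marg p i (x i) := by
  have h := Finset.single_le_sum (f := fun z : Fin n → α => if z i = x i then p z else 0)
    (fun z _ => by by_cases h : z i = x i <;> simp [h, hp z]) (Finset.mem_univ x)
  simpa [marg] using h

lemma sum_marg_mul (p : (Fin n → α) → ℝ) (i : Fin n) (f : α → ℝ) :
    ∑ a, marg p i a * f a = ∑ x, p x * f (x i) := by
  unfold marg
  simp only [Finset.sum_mul]
  rw [Finset.sum_comm]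
  refine Finset.sum_congr rfl fun x _ => ?_
  rw [Finset.sum_congr rfl (fun a _ => ite_mul (x i = a) (p x) 0 (f a))]
  simp

/-- Key collapse lemma. -/
lemma sum_joint_single (p : (Fin n → α) → ℝ) {W : α → β → ℝ} (hW : IsChannel W)
    (i : Fin n) (f : α → β → ℝ) :
    ∑ x : Fin n → α, ∑ y : Fin n → β, p x * nCh W n x y * f (x i) (y i)
      = ∑ a, ∑ c, marg p i a * W a c * f a c := by
  have h1 : ∀ x : Fin n → α, ∑ y : Fin n → β, nCh W n x y * f (x i) (y i)
      = ∑ c, W (x i) c * f (x i) c :=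
    fun x => sum_pi_prod_single (fun j c => W (x j) c) (fun j => (hW (x j)).2) i (f (x i))
  calc ∑ x : Fin n → α, ∑ y : Fin n → β, p x * nCh W n x y * f (x i) (y i)
      = ∑ x : Fin n → α, p x * ∑ y : Fin n → β, nCh W n x y * f (x i) (y i) := by
        refine Finset.sum_congr rfl fun x _ => ?_
        rw [Finset.mul_sum]
        exact Finset.sum_congr rfl fun y _ => by ring
    _ = ∑ x : Fin n → α, p x * ∑ c, W (x i) c * f (x i) c :=
        Finset.sum_congr rfl fun x _ => by rw [h1 x]
    _ = ∑ c, ∑ x : Fin n → α, p x * (W (x i) c * f (x i) c) := by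
        rw [Finset.sum_comm]
        exact Finset.sum_congr rfl fun x _ => by rw [Finset.mul_sum]
    _ = ∑ c, ∑ a, marg p i a * W a c * f a c := by
        refine Finset.sum_congr rfl fun c _ => ?_
        rw [← sum_marg_mul p i (fun a => W a c * f a c)]
        exact Finset.sum_congr rfl fun a _ => by ring
    _ = ∑ a, ∑ c, marg p i a * W a c * f a c := Finset.sum_comm
end Marg

lemma kl_nonneg {γ : Type} [Fintype γ] (q r : γ → ℝ) (hq : ∀ y, 0 ≤ q y) (hr : ∀ y, 0 ≤ r y)
    (hac : ∀ y, r y = 0 → q y = 0) (hsum : ∑ y, r y ≤ ∑ y, q y) :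
    0 ≤ ∑ y, q y * Real.log (q y / r y) := by
  have h : ∀ y, q y - r y ≤ q y * Real.log (q y / r y) := by
    intro y
    rcases eq_or_lt_of_le (hq y) with h0 | hpos
    · simp [← h0, hr y]
    · have hr0 : 0 < r y := by
        rcases eq_or_lt_of_le (hr y) with h1 | h1
        · exfalso; have := hac y h1.symm; linarith
        · exact h1
      have hlog := Real.log_le_sub_one_of_pos (show (0:ℝ) < r y / q y by positivity)
      rw [Real.log_div (ne_of_gt hr0) (ne_of_gt hpos)] at hlog
      have hlog2 : 1 - r y / q y ≤ Real.log (q y / r y) := by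
        rw [Real.log_div (ne_of_gt hpos) (ne_of_gt hr0)]; linarith
      have hmul : q y * (1 - r y / q y) ≤ q y * Real.log (q y / r y) :=
        mul_le_mul_of_nonneg_left hlog2 (le_of_lt hpos)
      have heq : q y * (1 - r y / q y) = q y - r y := by field_simp
      linarith
  calc (0:ℝ) ≤ ∑ y, (q y - r y) := by rw [Finset.sum_sub_distrib]; linarith
    _ ≤ _ := Finset.sum_le_sum (fun y _ => h y)

lemma nCh_nonneg {α β : Type} [Fintype β] {W : α → β → ℝ} (hW : IsChannel W) (n : ℕ)
    (x : Fin n → α) (y : Fin n → β) : 0 ≤ nCh W n x y :=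
  Finset.prod_nonneg fun i _ => (hW (x i)).1 (y i)

lemma sum_nCh {α β : Type} [Fintype β] {W : α → β → ℝ} (hW : IsChannel W) (n : ℕ)
    (x : Fin n → α) : ∑ y : Fin n → β, nCh W n x y = 1 := by
  unfold nCh
  rw [← Fintype.prod_sum]
  simp [(hW _).2]

lemma nCh_isChannel {α β : Type} [Fintype β] {W : α → β → ℝ} (hW : IsChannel W) (n : ℕ) :
    IsChannel (nCh W n) :=
  fun x => ⟨fun y => nCh_nonneg hW n x y, sum_nCh hW n x⟩

section ClaimA
variable {α β : Type} [Fintype α] [Fintype β] [DecidableEq α] {n : ℕ}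

lemma claimA (p : (Fin n → α) → ℝ) (hp : IsProbVec p)
    {W : α → β → ℝ} (hW : IsChannel W) :
    mutInfo p (nCh W n) ≤ ∑ i, mutInfo (marg p i) W := by
  classical
  -- notation
  have hmargnn : ∀ i a, 0 ≤ marg p i a := fun i a => marg_nonneg hp.1 i a
  have hqnn : ∀ (i : Fin n) (c : β), 0 ≤ outDist (marg p i) W c :=
    fun i c => outDist_nonneg (hmargnn i) (fun a c' => (hW a).1 c') c
  have hRnn : ∀ y : Fin n → β, 0 ≤ ∏ i, outDist (marg p i) W (y i) :=
    fun y => Finset.prod_nonneg fun i _ => hqnn i (y i)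
  -- positivity facts in the support
  have hsupp : ∀ (x : Fin n → α) (y : Fin n → β), 0 < p x * nCh W n x y →
      0 < p x ∧ (∀ i, 0 < W (x i) (y i)) ∧ (∀ i, 0 < outDist (marg p i) W (y i))
        ∧ 0 < nCh W n x y := by
    intro x y h0
    obtain ⟨hpx, hnch⟩ := (mul_pos_iff.mp h0).resolve_right
      (fun h => absurd h.1 (not_lt.2 (hp.1 x)))
    have hWpos : ∀ i, 0 < W (x i) (y i) := by
      intro i
      rcases eq_or_lt_of_le ((hW (x i)).1 (y i)) with h1 | h1
      · exact absurd (Finset.prod_eq_zero (Finset.mem_univ i) h1.symm) (ne_of_gt hnch)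
      · exact h1
    refine ⟨hpx, hWpos, fun i => ?_, hnch⟩
    exact lt_of_lt_of_le (mul_pos (lt_of_lt_of_le hpx (le_marg hp.1 i x)) (hWpos i))
      (term_le_outDist (hmargnn i) (fun a c => (hW a).1 c) (x i) (y i))
  -- pointwise splitting of the log with reference measure R
  have hpt1 : ∀ (x : Fin n → α) (y : Fin n → β),
      p x * nCh W n x y * Real.log (nCh W n x y / ∏ i, outDist (marg p i) W (y i))
        = ∑ i, p x * nCh W n x y * Real.log (W (x i) (y i) / outDist (marg p i) W (y i)) := by
    intro x y
    rcases eq_or_lt_of_le (mul_nonneg (hp.1 x) (nCh_nonneg hW n x y)) with h0 | h0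
    · rw [← h0]; simp
    · obtain ⟨hpx, hWpos, hq, hnch⟩ := hsupp x y h0
      have hR : 0 < ∏ i, outDist (marg p i) W (y i) := Finset.prod_pos fun i _ => hq i
      have e1 : Real.log (nCh W n x y / ∏ i, outDist (marg p i) W (y i))
          = ∑ i, Real.log (W (x i) (y i) / outDist (marg p i) W (y i)) := by
        rw [show nCh W n x y = ∏ i, W (x i) (y i) from rfl,
            Real.log_div (ne_of_gt (show (0:ℝ) < ∏ i, W (x i) (y i) from hnch)) (ne_of_gt hR),
            Real.log_prod (fun i _ => ne_of_gt (hWpos i)),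
            Real.log_prod (fun i _ => ne_of_gt (hq i)),
            ← Finset.sum_sub_distrib]
        exact Finset.sum_congr rfl fun i _ =>
          (Real.log_div (ne_of_gt (hWpos i)) (ne_of_gt (hq i))).symm
      rw [e1, Finset.mul_sum]
  -- pointwise splitting comparing R with the true output distribution Q
  have hpt2 : ∀ (x : Fin n → α) (y : Fin n → β),
      p x * nCh W n x y * Real.log (nCh W n x y / ∏ i, outDist (marg p i) W (y i))
        = p x * nCh W n x y * Real.log (nCh W n x y / outDist p (nCh W n) y)
          + p x * nCh W n x y
            * Real.log (outDist p (nCh W n) y / ∏ i, outDist (marg p i) W (y i)) := by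
    intro x y
    rcases eq_or_lt_of_le (mul_nonneg (hp.1 x) (nCh_nonneg hW n x y)) with h0 | h0
    · rw [← h0]; simp
    · obtain ⟨hpx, hWpos, hq, hnch⟩ := hsupp x y h0
      have hR : 0 < ∏ i, outDist (marg p i) W (y i) := Finset.prod_pos fun i _ => hq i
      have hQ : 0 < outDist p (nCh W n) y :=
        lt_of_lt_of_le h0 (term_le_outDist hp.1 (fun x' y' => nCh_nonneg hW n x' y') x y)
      rw [Real.log_div (ne_of_gt hnch) (ne_of_gt hR), Real.log_div (ne_of_gt hnch) (ne_of_gt hQ),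
          Real.log_div (ne_of_gt hQ) (ne_of_gt hR)]
      ring
  -- absolute continuity of Q wrt R
  have hac : ∀ y : Fin n → β, (∏ i, outDist (marg p i) W (y i)) = 0 →
      outDist p (nCh W n) y = 0 := by
    intro y hy
    obtain ⟨i, _, hi⟩ := Finset.prod_eq_zero_iff.mp hy
    apply Finset.sum_eq_zero
    intro x _
    rcases eq_or_lt_of_le (mul_nonneg (hp.1 x) (nCh_nonneg hW n x y)) with h0 | h0
    · exact h0.symm
    · exact absurd hi (ne_of_gt ((hsupp x y h0).2.2.1 i))
  -- sums of Q and R are both 1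
  have hsumQ : ∑ y : Fin n → β, outDist p (nCh W n) y = 1 :=
    sum_outDist hp.2 (nCh_isChannel hW n)
  have hsumR : ∑ y : Fin n → β, ∏ i, outDist (marg p i) W (y i) = 1 := by
    rw [← Fintype.prod_sum]
    have : ∀ i : Fin n, ∑ c, outDist (marg p i) W c = 1 := by
      intro i
      exact sum_outDist (by rw [sum_marg]; exact hp.2) hW
    simp [this]
  calc mutInfo p (nCh W n)
      ≤ mutInfo p (nCh W n) + ∑ y : Fin n → β, outDist p (nCh W n) y
          * Real.log (outDist p (nCh W n) y / ∏ i, outDist (marg p i) W (y i)) := by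
        refine le_add_of_nonneg_right (kl_nonneg _ _ ?_ ?_ hac (le_of_eq (hsumR.trans hsumQ.symm)))
        · exact fun y => outDist_nonneg hp.1 (fun x' y' => nCh_nonneg hW n x' y') y
        · exact fun y => Finset.prod_nonneg fun i _ => hqnn i (y i)
    _ = ∑ x : Fin n → α, ∑ y : Fin n → β, p x * nCh W n x y
          * Real.log (nCh W n x y / ∏ i, outDist (marg p i) W (y i)) := by
        rw [Finset.sum_congr rfl fun x (_ : x ∈ Finset.univ) =>
            Finset.sum_congr rfl fun y (_ : y ∈ Finset.univ) => hpt2 x y]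
        rw [Finset.sum_congr rfl fun x (_ : x ∈ Finset.univ) => Finset.sum_add_distrib,
            Finset.sum_add_distrib]
        unfold mutInfo
        congr 1
        rw [Finset.sum_comm]
        refine Finset.sum_congr rfl fun y _ => ?_
        rw [← Finset.sum_mul]
        rfl
    _ = ∑ i, mutInfo (marg p i) W := by
        rw [Finset.sum_congr rfl fun x (_ : x ∈ Finset.univ) =>
            Finset.sum_congr rfl fun y (_ : y ∈ Finset.univ) => hpt1 x y]
        rw [Finset.sum_congr rfl fun x (_ : x ∈ Finset.univ) => Finset.sum_comm,
            Finset.sum_comm]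
        refine Finset.sum_congr rfl fun i _ => ?_
        rw [sum_joint_single p hW i (fun a c => Real.log (W a c / outDist (marg p i) W c))]
        rfl
end ClaimA

section ClaimB
variable {α β : Type} [Fintype α] [Fintype β] {k : ℕ}

lemma outDist_mix (P : Fin k → α → ℝ) (W : α → β → ℝ) (c : β) :
    outDist (fun a => (k:ℝ)⁻¹ * ∑ i, P i a) W c = (k:ℝ)⁻¹ * ∑ i, outDist (P i) W c := by
  unfold outDist
  have h1 : ∀ x : α, ((k:ℝ)⁻¹ * ∑ i, P i x) * W x c = ∑ i, (k:ℝ)⁻¹ * (P i x * W x c) :=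
    fun x => by rw [mul_assoc, Finset.sum_mul, Finset.mul_sum]
  rw [Finset.sum_congr rfl fun x (_ : x ∈ Finset.univ) => h1 x, Finset.sum_comm,
      Finset.mul_sum]
  exact Finset.sum_congr rfl fun i _ => (Finset.mul_sum _ _ _).symm

lemma claimB (hk : 0 < k) (P : Fin k → α → ℝ) (hP : ∀ i, IsProbVec (P i))
    {W : α → β → ℝ} (hW : IsChannel W) :
    ∑ i, mutInfo (P i) W ≤ (k:ℝ) * mutInfo (fun a => (k:ℝ)⁻¹ * ∑ i, P i a) W := by
  classical
  have hk0 : (0:ℝ) < (k:ℝ) := Nat.cast_pos.mpr hk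
  have hqinn : ∀ (i : Fin k) (c : β), 0 ≤ outDist (P i) W c :=
    fun i c => outDist_nonneg (hP i).1 (fun a c' => (hW a).1 c') c
  have hbar_ge : ∀ (i : Fin k) (c : β),
      (k:ℝ)⁻¹ * outDist (P i) W c ≤ outDist (fun a => (k:ℝ)⁻¹ * ∑ j, P j a) W c := by
    intro i c
    rw [outDist_mix]
    exact mul_le_mul_of_nonneg_left
      (Finset.single_le_sum (fun j _ => hqinn j c) (Finset.mem_univ i)) (by positivity)
  have hbar_nn : ∀ c, 0 ≤ outDist (fun a => (k:ℝ)⁻¹ * ∑ j, P j a) W c := by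
    intro c
    rw [outDist_mix]
    exact mul_nonneg (by positivity) (Finset.sum_nonneg fun j _ => hqinn j c)
  have hsum_qi : ∀ i : Fin k, ∑ c, outDist (P i) W c = 1 := fun i => sum_outDist (hP i).2 hW
  have hsum_bar : ∑ c, outDist (fun a => (k:ℝ)⁻¹ * ∑ j, P j a) W c = 1 := by
    simp only [outDist_mix, ← Finset.mul_sum]
    rw [Finset.sum_comm]
    simp [hsum_qi, Finset.card_univ, inv_mul_cancel₀ (ne_of_gt hk0)]
  -- per-summand inequality
  have hkey : ∀ i : Fin k, mutInfo (P i) W ≤ ∑ a, ∑ c, P i a * W a c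
      * Real.log (W a c / outDist (fun a' => (k:ℝ)⁻¹ * ∑ j, P j a') W c) := by
    intro i
    have hpt : ∀ (a : α) (c : β), P i a * W a c
        * Real.log (W a c / outDist (fun a' => (k:ℝ)⁻¹ * ∑ j, P j a') W c)
        = P i a * W a c * Real.log (W a c / outDist (P i) W c)
          + P i a * W a c * Real.log (outDist (P i) W c
              / outDist (fun a' => (k:ℝ)⁻¹ * ∑ j, P j a') W c) := by
      intro a c
      rcases eq_or_lt_of_le (mul_nonneg ((hP i).1 a) ((hW a).1 c)) with h0 | h0
      · rw [← h0]; simp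
      · have hWpos : 0 < W a c := by
          rcases eq_or_lt_of_le ((hW a).1 c) with h1 | h1
          · exfalso; rw [← h1, mul_zero] at h0; exact lt_irrefl _ h0
          · exact h1
        have hqi : 0 < outDist (P i) W c :=
          lt_of_lt_of_le h0 (term_le_outDist (hP i).1 (fun a' c' => (hW a').1 c') a c)
        have hbar : 0 < outDist (fun a' => (k:ℝ)⁻¹ * ∑ j, P j a') W c :=
          lt_of_lt_of_le (by positivity) (hbar_ge i c)
        rw [Real.log_div (ne_of_gt hWpos) (ne_of_gt hbar),
            Real.log_div (ne_of_gt hWpos) (ne_of_gt hqi),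
            Real.log_div (ne_of_gt hqi) (ne_of_gt hbar)]
        ring
    rw [Finset.sum_congr rfl fun a (_ : a ∈ Finset.univ) =>
        Finset.sum_congr rfl fun c (_ : c ∈ Finset.univ) => hpt a c]
    rw [Finset.sum_congr rfl fun a (_ : a ∈ Finset.univ) => Finset.sum_add_distrib,
        Finset.sum_add_distrib]
    refine le_add_of_nonneg_right ?_
    have heq : ∑ a, ∑ c, P i a * W a c * Real.log (outDist (P i) W c
        / outDist (fun a' => (k:ℝ)⁻¹ * ∑ j, P j a') W c)
        = ∑ c, outDist (P i) W c * Real.log (outDist (P i) W c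
            / outDist (fun a' => (k:ℝ)⁻¹ * ∑ j, P j a') W c) := by
      rw [Finset.sum_comm]
      refine Finset.sum_congr rfl fun c _ => ?_
      rw [← Finset.sum_mul]
      rfl
    rw [heq]
    refine kl_nonneg _ _ (fun c => hqinn i c) hbar_nn ?_
      (le_of_eq (hsum_bar.trans (hsum_qi i).symm))
    intro c hc
    have h1 := hbar_ge i c
    rw [hc] at h1
    nlinarith [hqinn i c, inv_pos.mpr hk0]
  -- summing up
  calc ∑ i, mutInfo (P i) W
      ≤ ∑ i, ∑ a, ∑ c, P i a * W a c
          * Real.log (W a c / outDist (fun a' => (k:ℝ)⁻¹ * ∑ j, P j a') W c) :=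
        Finset.sum_le_sum fun i _ => hkey i
    _ = (k:ℝ) * mutInfo (fun a => (k:ℝ)⁻¹ * ∑ i, P i a) W := by
        unfold mutInfo
        rw [Finset.sum_comm]
        conv_rhs => rw [Finset.mul_sum]
        refine Finset.sum_congr rfl fun a _ => ?_
        rw [Finset.sum_comm]
        conv_rhs => rw [Finset.mul_sum]
        refine Finset.sum_congr rfl fun c _ => ?_
        rw [← Finset.sum_mul, ← Finset.sum_mul]
        have hklog : (k:ℝ) * ((k:ℝ)⁻¹ * ∑ i, P i a) = ∑ i, P i a := by
          field_simp
        rw [← hklog]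
        ring
end ClaimB

section Energy
variable {α β : Type} [Fintype α] [Fintype β] [DecidableEq α] {n : ℕ}

lemma energy_split (p : (Fin n → α) → ℝ) {W : α → β → ℝ} (hW : IsChannel W) (b : β → ℝ) :
    outEnergy p (nCh W n) (blockE b) = ∑ i, outEnergy (marg p i) W b := by
  unfold outEnergy blockE outDist
  have h1 : ∀ y : Fin n → β, (∑ x, p x * nCh W n x y) * (∑ i, b (y i))
      = ∑ i, ∑ x, p x * nCh W n x y * b (y i) := by
    intro y
    rw [Finset.mul_sum]
    exact Finset.sum_congr rfl fun i _ => by rw [Finset.sum_mul]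
  rw [Finset.sum_congr rfl fun y (_ : y ∈ Finset.univ) => h1 y, Finset.sum_comm]
  refine Finset.sum_congr rfl fun i _ => ?_
  rw [Finset.sum_comm, sum_joint_single p hW i (fun _ c => b c), Finset.sum_comm]
  exact Finset.sum_congr rfl fun c _ => (Finset.sum_mul _ _ _).symm

lemma outEnergy_mix {k : ℕ} (P : Fin k → α → ℝ) (W : α → β → ℝ) (b : β → ℝ) :
    outEnergy (fun a => (k:ℝ)⁻¹ * ∑ i, P i a) W b = (k:ℝ)⁻¹ * ∑ i, outEnergy (P i) W b := by
  unfold outEnergy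
  simp only [outDist_mix]
  have h1 : ∀ y : β, ((k:ℝ)⁻¹ * ∑ i, outDist (P i) W y) * b y
      = ∑ i, (k:ℝ)⁻¹ * (outDist (P i) W y * b y) :=
    fun y => by rw [mul_assoc, Finset.sum_mul, Finset.mul_sum]
  rw [Finset.sum_congr rfl fun y (_ : y ∈ Finset.univ) => h1 y, Finset.sum_comm,
      Finset.mul_sum]
  exact Finset.sum_congr rfl fun i _ => (Finset.mul_sum _ _ _).symm

lemma marg_isProbVec {p : (Fin n → α) → ℝ} (hp : IsProbVec p) (i : Fin n) :
    IsProbVec (marg p i) :=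
  ⟨marg_nonneg hp.1 i, (sum_marg p i).trans hp.2⟩

lemma mix_isProbVec {k : ℕ} (hk : 0 < k) (P : Fin k → α → ℝ) (hP : ∀ i, IsProbVec (P i)) :
    IsProbVec (fun a => (k:ℝ)⁻¹ * ∑ i, P i a) := by
  constructor
  · exact fun a => mul_nonneg (by positivity) (Finset.sum_nonneg fun i _ => (hP i).1 a)
  · rw [← Finset.mul_sum, Finset.sum_comm]
    have : ∀ i : Fin k, ∑ a, P i a = 1 := fun i => (hP i).2
    simp [this, Finset.card_univ]
    field_simp
end Energy

section Product
variable {α β : Type} [Fintype α] [Fintype β] [DecidableEq α] {n : ℕ}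

lemma prod_isProbVec {p : α → ℝ} (hp : IsProbVec p) (n : ℕ) :
    IsProbVec (fun x : Fin n → α => ∏ i, p (x i)) := by
  constructor
  · exact fun x => Finset.prod_nonneg fun i _ => hp.1 (x i)
  · rw [← Fintype.prod_sum]
    simp [hp.2]

lemma marg_prod {p : α → ℝ} (hp : IsProbVec p) (i : Fin n) (a : α) :
    marg (fun x : Fin n → α => ∏ j, p (x j)) i a = p a := by
  unfold marg
  have key : ∀ x : Fin n → α, (if x i = a then ∏ j, p (x j) else 0)
      = ∏ j, (if j = i then (if x j = a then p (x j) else 0) else p (x j)) := by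
    intro x
    rw [← Finset.mul_prod_erase Finset.univ
          (fun j => if j = i then (if x j = a then p (x j) else 0) else p (x j))
          (Finset.mem_univ i),
        if_pos rfl,
        Finset.prod_congr rfl (fun j hj => if_neg (Finset.ne_of_mem_erase hj))]
    by_cases h : x i = a
    · rw [if_pos h, if_pos h,
        ← Finset.mul_prod_erase Finset.univ (fun j => p (x j)) (Finset.mem_univ i)]
    · rw [if_neg h, if_neg h, zero_mul]
  rw [Finset.sum_congr rfl fun x (_ : x ∈ Finset.univ) => key x,
      ← Fintype.prod_sum fun j c => if j = i then (if c = a then p c else 0) else p c,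
      ← Finset.mul_prod_erase Finset.univ _ (Finset.mem_univ i)]
  have h1 : (∑ c : α, if i = i then (if c = a then p c else 0) else p c) = p a := by simp
  have h2 : ∀ j ∈ Finset.univ.erase i,
      (∑ c : α, if j = i then (if c = a then p c else 0) else p c) = 1 := fun j hj => by
    simp [if_neg (Finset.ne_of_mem_erase hj), hp.2]
  rw [h1, Finset.prod_congr rfl h2, Finset.prod_const_one, mul_one]

lemma outDist_prod (p : α → ℝ) (W : α → β → ℝ) (y : Fin n → β) :
    outDist (fun x : Fin n → α => ∏ i, p (x i)) (nCh W n) y = ∏ i, outDist p W (y i) := by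
  unfold outDist nCh
  have h1 : ∀ x : Fin n → α, (∏ i, p (x i)) * ∏ i, W (x i) (y i)
      = ∏ i, p (x i) * W (x i) (y i) := fun x => (Finset.prod_mul_distrib).symm
  rw [Finset.sum_congr rfl fun x (_ : x ∈ Finset.univ) => h1 x]
  exact (Fintype.prod_sum fun (i : Fin n) (c : α) => p c * W c (y i)).symm
end Product

section Product2
variable {α β : Type} [Fintype α] [Fintype β] [DecidableEq α] {n : ℕ}

lemma mutInfo_prod {p : α → ℝ} (hp : IsProbVec p) {W : α → β → ℝ} (hW : IsChannel W)
    (n : ℕ) :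
    mutInfo (fun x : Fin n → α => ∏ i, p (x i)) (nCh W n) = (n:ℝ) * mutInfo p W := by
  classical
  have hPnn := (prod_isProbVec hp n).1
  have hpt : ∀ (x : Fin n → α) (y : Fin n → β),
      (∏ i, p (x i)) * nCh W n x y
          * Real.log (nCh W n x y / outDist (fun x' : Fin n → α => ∏ i, p (x' i)) (nCh W n) y)
        = ∑ i, (∏ j, p (x j)) * nCh W n x y
            * Real.log (W (x i) (y i) / outDist p W (y i)) := by
    intro x y
    rcases eq_or_lt_of_le (mul_nonneg (hPnn x) (nCh_nonneg hW n x y)) with h0 | h0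
    · rw [← h0]; simp
    · obtain ⟨hPx, hnch⟩ := (mul_pos_iff.mp h0).resolve_right
        (fun h => absurd h.1 (not_lt.2 (hPnn x)))
      have hpx : ∀ i, 0 < p (x i) := by
        intro i
        rcases eq_or_lt_of_le (hp.1 (x i)) with h1 | h1
        · exact absurd (Finset.prod_eq_zero (Finset.mem_univ i) h1.symm) (ne_of_gt hPx)
        · exact h1
      have hWpos : ∀ i, 0 < W (x i) (y i) := by
        intro i
        rcases eq_or_lt_of_le ((hW (x i)).1 (y i)) with h1 | h1
        · exact absurd (Finset.prod_eq_zero (Finset.mem_univ i) h1.symm) (ne_of_gt hnch)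
        · exact h1
      have hq : ∀ i, 0 < outDist p W (y i) := fun i =>
        lt_of_lt_of_le (mul_pos (hpx i) (hWpos i))
          (term_le_outDist hp.1 (fun a c => (hW a).1 c) (x i) (y i))
      have e1 : Real.log (nCh W n x y
          / outDist (fun x' : Fin n → α => ∏ i, p (x' i)) (nCh W n) y)
          = ∑ i, Real.log (W (x i) (y i) / outDist p W (y i)) := by
        rw [outDist_prod p W y,
            show nCh W n x y = ∏ i, W (x i) (y i) from rfl,
            Real.log_div (ne_of_gt (show (0:ℝ) < ∏ i, W (x i) (y i) from hnch))
              (ne_of_gt (Finset.prod_pos fun i _ => hq i)),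
            Real.log_prod (fun i _ => ne_of_gt (hWpos i)),
            Real.log_prod (fun i _ => ne_of_gt (hq i)),
            ← Finset.sum_sub_distrib]
        exact Finset.sum_congr rfl fun i _ =>
          (Real.log_div (ne_of_gt (hWpos i)) (ne_of_gt (hq i))).symm
      rw [e1, Finset.mul_sum]
  unfold mutInfo
  rw [Finset.sum_congr rfl fun x (_ : x ∈ Finset.univ) =>
      Finset.sum_congr rfl fun y (_ : y ∈ Finset.univ) => hpt x y]
  rw [Finset.sum_congr rfl fun x (_ : x ∈ Finset.univ) => Finset.sum_comm, Finset.sum_comm]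
  have hper : ∀ i : Fin n,
      (∑ x : Fin n → α, ∑ y : Fin n → β, (∏ j, p (x j)) * nCh W n x y
        * Real.log (W (x i) (y i) / outDist p W (y i)))
      = ∑ a, ∑ c, p a * W a c * Real.log (W a c / outDist p W c) := by
    intro i
    rw [sum_joint_single (fun x : Fin n → α => ∏ j, p (x j)) hW i
          (fun a c => Real.log (W a c / outDist p W c))]
    exact Finset.sum_congr rfl fun a _ => Finset.sum_congr rfl fun c _ => by
      rw [marg_prod hp i a]
  rw [Finset.sum_congr rfl fun i (_ : i ∈ Finset.univ) => hper i]
  simp [Finset.card_univ, mutInfo]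

lemma outEnergy_prod {p : α → ℝ} (hp : IsProbVec p) {W : α → β → ℝ} (hW : IsChannel W)
    (b : β → ℝ) (n : ℕ) :
    outEnergy (fun x : Fin n → α => ∏ i, p (x i)) (nCh W n) (blockE b)
      = (n:ℝ) * outEnergy p W b := by
  rw [energy_split _ hW b]
  have h1 : ∀ i : Fin n, outEnergy (marg (fun x : Fin n → α => ∏ j, p (x j)) i) W b
      = outEnergy p W b := by
    intro i
    congr 1
    funext a
    exact marg_prod hp i a
  rw [Finset.sum_congr rfl fun i (_ : i ∈ Finset.univ) => h1 i]
  simp [Finset.card_univ]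
end Product2

section One
variable {α β : Type} [Fintype α] [Fintype β]

lemma sum_fin_one (f : (Fin 1 → α) → ℝ) : ∑ x : Fin 1 → α, f x = ∑ a, f (fun _ => a) := by
  apply Fintype.sum_equiv (Equiv.funUnique (Fin 1) α)
  intro x
  exact congrArg f (funext fun i => congrArg x (Subsingleton.elim i default))

lemma probVec_one {p : α → ℝ} (hp : IsProbVec p) :
    IsProbVec (fun x : Fin 1 → α => p (x 0)) :=
  ⟨fun x => hp.1 (x 0), by rw [sum_fin_one (fun x => p (x 0))]; exact hp.2⟩

lemma probVec_one' {p : (Fin 1 → α) → ℝ} (hp : IsProbVec p) :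
    IsProbVec (fun a : α => p (fun _ => a)) :=
  ⟨fun a => hp.1 _, by rw [← sum_fin_one p]; exact hp.2⟩

lemma fun_one_eta (p : (Fin 1 → α) → ℝ) :
    (fun x : Fin 1 → α => p (fun _ => x 0)) = p := by
  funext x
  exact congrArg p (funext fun i => congrArg x (Subsingleton.elim 0 i))

lemma outDist_one (p : α → ℝ) (V : α → β → ℝ) (y : Fin 1 → β) :
    outDist (fun x : Fin 1 → α => p (x 0)) (nCh V 1) y = outDist p V (y 0) := by
  unfold outDist nCh
  rw [sum_fin_one (fun x : Fin 1 → α => p (x 0) * ∏ i, V (x i) (y i))]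
  simp [Fin.prod_univ_one]

lemma blockE_one (b : β → ℝ) (y : Fin 1 → β) : blockE b y = b (y 0) := by
  simp [blockE]

lemma outEnergy_one (p : α → ℝ) (V : α → β → ℝ) (b : β → ℝ) :
    outEnergy (fun x : Fin 1 → α => p (x 0)) (nCh V 1) (blockE b) = outEnergy p V b := by
  unfold outEnergy
  rw [sum_fin_one (fun y : Fin 1 → β =>
      outDist (fun x : Fin 1 → α => p (x 0)) (nCh V 1) y * blockE b y)]
  refine Finset.sum_congr rfl fun c _ => ?_
  rw [outDist_one, blockE_one]

lemma mutInfo_one (p : α → ℝ) (V : α → β → ℝ) :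
    mutInfo (fun x : Fin 1 → α => p (x 0)) (nCh V 1) = mutInfo p V := by
  unfold mutInfo
  rw [sum_fin_one (fun x : Fin 1 → α => ∑ y : Fin 1 → β, p (x 0) * nCh V 1 x y
      * Real.log (nCh V 1 x y / outDist (fun x' : Fin 1 → α => p (x' 0)) (nCh V 1) y))]
  refine Finset.sum_congr rfl fun a _ => ?_
  rw [sum_fin_one (fun y : Fin 1 → β => p a * nCh V 1 (fun _ => a) y
      * Real.log (nCh V 1 (fun _ => a) y
          / outDist (fun x' : Fin 1 → α => p (x' 0)) (nCh V 1) y))]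
  refine Finset.sum_congr rfl fun c _ => ?_
  rw [outDist_one]
  have : nCh V 1 (fun _ => a) (fun _ => c) = V a c := by simp [nCh]
  rw [this]
end One

/-- **Single-letterization with unequal energy constraints** (Appendix, Theorem 5):
for any multicast DMC with possibly different energy functions `b_ℓ`, any `n ∈ ℤ⁺`
and any `B⃗ ∈ 𝓑`, `C_n(B⃗) = n · C_1(B⃗)`. -/
theorem CnVec_single_letter
    {𝓧 : Type} [Fintype 𝓧] [Nonempty 𝓧] {L : ℕ} (hL : 0 < L)
    {𝓨 : Fin L → Type} [∀ ℓ, Fintype (𝓨 ℓ)]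
    (W : ∀ ℓ, 𝓧 → 𝓨 ℓ → ℝ) (hW : ∀ ℓ, IsChannel (W ℓ))
    (b : ∀ ℓ, 𝓨 ℓ → ℝ) (hb : ∀ ℓ y, 0 ≤ b ℓ y)
    (n : ℕ) (hn : 0 < n) (B : Fin L → ℝ) (hB : B ∈ FeasibleB W b) :
    CnVec W b B n = n * CnVec W b B 1 := by
  --
  classical
  haveI : Nonempty (Fin L) := ⟨⟨0, hL⟩⟩
  obtain ⟨q, hq, hqB⟩ := hB
  have hn0 : (0:ℝ) < (n:ℝ) := Nat.cast_pos.mpr hn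
  set ℓ0 : Fin L := ⟨0, hL⟩ with hℓ0
  -- the two sets
  set Sn : Set ℝ := { r | ∃ p : (Fin n → 𝓧) → ℝ, IsProbVec p ∧
      (∀ ℓ, (n : ℝ) * B ℓ ≤ outEnergy p (nCh (W ℓ) n) (blockE (b ℓ))) ∧
      r = ⨅ ℓ, mutInfo p (nCh (W ℓ) n) } with hSn
  set S1 : Set ℝ := { r | ∃ p : (Fin 1 → 𝓧) → ℝ, IsProbVec p ∧
      (∀ ℓ, ((1:ℕ) : ℝ) * B ℓ ≤ outEnergy p (nCh (W ℓ) 1) (blockE (b ℓ))) ∧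
      r = ⨅ ℓ, mutInfo p (nCh (W ℓ) 1) } with hS1
  have hCn : CnVec W b B n = sSup Sn := rfl
  have hC1 : CnVec W b B 1 = sSup S1 := rfl
  -- boundedness
  have hbddn : ∀ m : ℕ, BddAbove { r | ∃ p : (Fin m → 𝓧) → ℝ, IsProbVec p ∧
      (∀ ℓ, (m : ℝ) * B ℓ ≤ outEnergy p (nCh (W ℓ) m) (blockE (b ℓ))) ∧
      r = ⨅ ℓ, mutInfo p (nCh (W ℓ) m) } := by
    intro m
    refine ⟨(Fintype.card (Fin m → 𝓧) : ℝ) * (Fintype.card (Fin m → 𝓨 ℓ0) : ℝ), ?_⟩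
    rintro r ⟨p, hp, -, rfl⟩
    refine le_trans (ciInf_le (Set.Finite.bddBelow (Set.finite_range _)) ℓ0) ?_
    exact mutInfo_le_card _ hp.1 _ (nCh_isChannel (hW ℓ0) m)
  have hbddSn : BddAbove Sn := hbddn n
  have hbddS1 : BddAbove S1 := hbddn 1
  -- nonemptiness
  have hS1mem : ∀ p : 𝓧 → ℝ, IsProbVec p → (∀ ℓ, B ℓ ≤ outEnergy p (W ℓ) (b ℓ)) →
      (⨅ ℓ, mutInfo p (W ℓ)) ∈ S1 := by
    intro p hp hpE
    refine ⟨fun x => p (x 0), probVec_one hp, ?_, ?_⟩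
    · intro ℓ
      rw [outEnergy_one p (W ℓ) (b ℓ)]
      simpa using hpE ℓ
    · exact iInf_congr fun ℓ => (mutInfo_one p (W ℓ)).symm
  have hS1ne : S1.Nonempty :=
    ⟨_, hS1mem q hq fun ℓ => le_of_eq (hqB ℓ)⟩
  -- lower bound: any element of S1 scaled by n lies in Sn
  have hscale : ∀ r ∈ S1, (n:ℝ) * r ∈ Sn := by
    rintro r ⟨p1, hp1, hp1E, rfl⟩
    set p : 𝓧 → ℝ := fun a => p1 (fun _ => a) with hpdef
    have hp : IsProbVec p := probVec_one' hp1
    have heta : (fun x : Fin 1 → 𝓧 => p (x 0)) = p1 := fun_one_eta p1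
    have hmut1 : ∀ ℓ, mutInfo p1 (nCh (W ℓ) 1) = mutInfo p (W ℓ) := by
      intro ℓ
      rw [← heta, mutInfo_one]
    have hE1 : ∀ ℓ, B ℓ ≤ outEnergy p (W ℓ) (b ℓ) := by
      intro ℓ
      have := hp1E ℓ
      rw [← heta, outEnergy_one] at this
      simpa using this
    refine ⟨fun x : Fin n → 𝓧 => ∏ i, p (x i), prod_isProbVec hp n, ?_, ?_⟩
    · intro ℓ
      rw [outEnergy_prod hp (hW ℓ) (b ℓ) n]
      exact mul_le_mul_of_nonneg_left (hE1 ℓ) hn0.le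
    · rw [Real.mul_iInf_of_nonneg hn0.le]
      refine iInf_congr fun ℓ => ?_
      rw [hmut1 ℓ, mutInfo_prod hp (hW ℓ) n]
  have hSnne : Sn.Nonempty := by
    obtain ⟨r, hr⟩ := hS1ne
    exact ⟨_, hscale r hr⟩
  -- lower inequality
  have hlow : (n:ℝ) * sSup S1 ≤ sSup Sn := by
    have h : sSup S1 ≤ (sSup Sn) / (n:ℝ) := by
      refine csSup_le hS1ne fun r hr => ?_
      have h2 := le_csSup hbddSn (hscale r hr)
      rw [le_div_iff₀ hn0]
      linarith
    calc (n:ℝ) * sSup S1 ≤ (n:ℝ) * ((sSup Sn) / (n:ℝ)) :=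
          mul_le_mul_of_nonneg_left h hn0.le
      _ = sSup Sn := by field_simp
  -- upper inequality
  have hup : sSup Sn ≤ (n:ℝ) * sSup S1 := by
    refine csSup_le hSnne ?_
    rintro r ⟨p, hp, hpE, rfl⟩
    set pbar : 𝓧 → ℝ := fun a => (n:ℝ)⁻¹ * ∑ i, marg p i a with hpbardef
    have hpbar : IsProbVec pbar :=
      mix_isProbVec hn (fun i => marg p i) (fun i => marg_isProbVec hp i)
    have hpbarE : ∀ ℓ, B ℓ ≤ outEnergy pbar (W ℓ) (b ℓ) := by
      intro ℓ
      have h1 := hpE ℓ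
      rw [energy_split p (hW ℓ) (b ℓ)] at h1
      have h2 : outEnergy pbar (W ℓ) (b ℓ)
          = (n:ℝ)⁻¹ * ∑ i, outEnergy (marg p i) (W ℓ) (b ℓ) :=
        outEnergy_mix (fun i => marg p i) (W ℓ) (b ℓ)
      calc B ℓ = (n:ℝ)⁻¹ * ((n:ℝ) * B ℓ) := by field_simp
        _ ≤ (n:ℝ)⁻¹ * ∑ i, outEnergy (marg p i) (W ℓ) (b ℓ) :=
            mul_le_mul_of_nonneg_left h1 (by positivity)
        _ = outEnergy pbar (W ℓ) (b ℓ) := h2.symm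
    have hkey : ∀ ℓ, mutInfo p (nCh (W ℓ) n) ≤ (n:ℝ) * mutInfo pbar (W ℓ) := by
      intro ℓ
      exact le_trans (claimA p hp (hW ℓ))
        (claimB hn (fun i => marg p i) (fun i => marg_isProbVec hp i) (hW ℓ))
    have hstep : (⨅ ℓ, mutInfo p (nCh (W ℓ) n)) ≤ (n:ℝ) * ⨅ ℓ, mutInfo pbar (W ℓ) := by
      rw [Real.mul_iInf_of_nonneg hn0.le]
      refine le_ciInf fun ℓ => ?_
      exact le_trans (ciInf_le (Set.Finite.bddBelow (Set.finite_range _)) ℓ) (hkey ℓ)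
    refine le_trans hstep ?_
    refine mul_le_mul_of_nonneg_left ?_ hn0.le
    exact le_csSup hbddS1 (hS1mem pbar hpbar hpbarE)
  rw [hCn, hC1]
  exact le_antisymm hup hlow

end
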